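/- arXiv:1709.06880 — 3 statements merged into one kernel-verified Lean document; each statement's English description precedes it below -/
import Mathlib

section
/- Let K ≥ 2 be an integer, ε ≥ 0, B ≥ 0 and 0 ≤ q < 1. Suppose nonnegative real numbers e_k^{(j)}, for k ∈ {1,…,K} and j ≥ 0, satisfy e_k^{(0)} ≤ B for every k, and for every j ≥ 0 and every k the Gauss–Seidel-type inequality e_k^{(j+1)} ≤ ε + (q/(K−1)) ( Σ_{i=1}^{k−1} e_i^{(j+1)} + Σ_{i=k+1}^{K} e_i^{(j)} ). Then for every j ≥ 0 and every k ∈ {1,…,K}: e_k^{(j+1)} ≤ ε/(1−q) + B q^{⌈(jK+k)/(K−1)⌉}, where ⌈·⌉ denotes the ceiling (smallest integer greater than or equal to the argument). (This is the K-component quantitative core of Theorems 3.2 and 3.3: in the paper e_k^{(j+1)} = ‖s^{E,(j)}_k‖_{L^2} is the L^2 norm of the k-th residual shape function after sweep j of the Gauss–Seidel RDBR, q = M^2(K−1)β with β the well-differentiation parameter of the K phase functions, and ε is the per-step regression accuracy, which in the noisy case absorbs the noise-induced error for L large enough.) -/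
/-- `K`-component Gauss–Seidel recursion core of Theorems 3.2 and 3.3.
Components are indexed by `k ∈ {1,…,K}`. -/
theorem gauss_seidel_K_component
    (K : ℕ) (hK : 2 ≤ K) (ε B q : ℝ) (hε : 0 ≤ ε) (hB : 0 ≤ B)
    (hq0 : 0 ≤ q) (hq1 : q < 1)
    (e : ℕ → ℕ → ℝ) (hnonneg : ∀ j k, 0 ≤ e j k)
    (h0 : ∀ k ∈ Finset.Icc 1 K, e 0 k ≤ B)
    (hrec : ∀ j : ℕ, ∀ k ∈ Finset.Icc 1 K,
      e (j + 1) k ≤ ε + (q / ((K : ℝ) - 1)) *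
        ((∑ i ∈ Finset.Ico 1 k, e (j + 1) i) + (∑ i ∈ Finset.Ioc k K, e j i))) :
    ∀ j : ℕ, ∀ k ∈ Finset.Icc 1 K,
      e (j + 1) k ≤ ε / (1 - q) + B * q ^ (⌈((j * K + k : ℕ) : ℝ) / ((K : ℝ) - 1)⌉₊) := by
  have hK1 : (2:ℝ) ≤ (K:ℝ) := by exact_mod_cast hK
  have hD : (0:ℝ) < (K:ℝ) - 1 := by linarith
  have hq1' : (0:ℝ) < 1 - q := by linarith
  have hc0 : 0 ≤ ε / (1 - q) := div_nonneg hε hq1'.le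
  -- ceiling comparison helper
  have hceil : ∀ a b : ℕ, (a:ℝ) ≤ (b:ℝ) + ((K:ℝ) - 1) →
      ⌈(a:ℝ) / ((K:ℝ) - 1)⌉₊ ≤ ⌈(b:ℝ) / ((K:ℝ) - 1)⌉₊ + 1 := by
    intro a b hab
    have h1 : (a:ℝ) / ((K:ℝ) - 1) ≤ (b:ℝ) / ((K:ℝ) - 1) + 1 := by
      have h2 : (a:ℝ) / ((K:ℝ) - 1) ≤ ((b:ℝ) + ((K:ℝ) - 1)) / ((K:ℝ) - 1) := by gcongr
      rwa [add_div, div_self hD.ne'] at h2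
    calc ⌈(a:ℝ) / ((K:ℝ) - 1)⌉₊ ≤ ⌈(b:ℝ) / ((K:ℝ) - 1) + 1⌉₊ := Nat.ceil_mono h1
      _ = ⌈(b:ℝ) / ((K:ℝ) - 1)⌉₊ + 1 := by
          exact Nat.ceil_add_one (by positivity)
  -- the single-sweep estimate
  have sweep : ∀ j : ℕ,
      (∀ k i, k ∈ Finset.Icc 1 K → i ∈ Finset.Icc 1 K → k < i →
        e j i ≤ ε / (1 - q) + B * q ^ (⌈((j * K + k : ℕ) : ℝ) / ((K : ℝ) - 1)⌉₊ - 1)) →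
      ∀ k ∈ Finset.Icc 1 K,
        e (j + 1) k ≤ ε / (1 - q) + B * q ^ (⌈((j * K + k : ℕ) : ℝ) / ((K : ℝ) - 1)⌉₊) := by
    intro j hprev k
    induction k using Nat.strong_induction_on with
    | _ k ihk =>
      intro hk
      obtain ⟨hk1, hkK⟩ := Finset.mem_Icc.mp hk
      set n : ℕ := ⌈((j * K + k : ℕ) : ℝ) / ((K : ℝ) - 1)⌉₊ with hn
      have hn1 : 1 ≤ n := by
        rw [hn]
        refine Nat.one_le_ceil_iff.mpr (div_pos ?_ hD)
        have : 0 < j * K + k := by omega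
        exact_mod_cast this
      set m : ℕ := n - 1 with hm
      set C : ℝ := ε / (1 - q) + B * q ^ m with hC
      have hC0 : 0 ≤ C := by positivity
      -- each current-sweep term
      have bound1 : ∀ i ∈ Finset.Ico 1 k, e (j + 1) i ≤ C := by
        intro i hi
        obtain ⟨hi1, hik⟩ := Finset.mem_Ico.mp hi
        have hiK : i ∈ Finset.Icc 1 K := Finset.mem_Icc.mpr ⟨hi1, by omega⟩
        have h1 := ihk i hik hiK
        have hle : n ≤ ⌈((j * K + i : ℕ) : ℝ) / ((K : ℝ) - 1)⌉₊ + 1 := by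
          apply hceil
          push_cast
          have : (k:ℝ) ≤ K := by exact_mod_cast hkK
          have : (1:ℝ) ≤ i := by exact_mod_cast hi1
          push_cast
          nlinarith [(by exact_mod_cast hkK : (k:ℝ) ≤ K), (by exact_mod_cast hi1 : (1:ℝ) ≤ i)]
        have hm' : m ≤ ⌈((j * K + i : ℕ) : ℝ) / ((K : ℝ) - 1)⌉₊ := by omega
        have hpow : q ^ (⌈((j * K + i : ℕ) : ℝ) / ((K : ℝ) - 1)⌉₊) ≤ q ^ m :=
          pow_le_pow_of_le_one hq0 hq1.le hm'
        calc e (j + 1) i ≤ ε / (1 - q) + B * q ^ (⌈((j * K + i : ℕ) : ℝ) / ((K : ℝ) - 1)⌉₊) := h1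
          _ ≤ C := by
              rw [hC]
              have := mul_le_mul_of_nonneg_left hpow hB
              linarith
      -- each previous-sweep term
      have bound2 : ∀ i ∈ Finset.Ioc k K, e j i ≤ C := by
        intro i hi
        obtain ⟨hki, hiK⟩ := Finset.mem_Ioc.mp hi
        exact hprev k i hk (Finset.mem_Icc.mpr ⟨by omega, hiK⟩) hki
      -- sum bounds
      have hs1 : (∑ i ∈ Finset.Ico 1 k, e (j + 1) i) ≤ (k - 1 : ℕ) • C := by
        have := Finset.sum_le_card_nsmul _ _ C bound1
        rwa [Nat.card_Ico] at this
      have hs2 : (∑ i ∈ Finset.Ioc k K, e j i) ≤ (K - k : ℕ) • C := by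
        have := Finset.sum_le_card_nsmul _ _ C bound2
        rwa [Nat.card_Ioc] at this
      have hsum : (∑ i ∈ Finset.Ico 1 k, e (j + 1) i) + (∑ i ∈ Finset.Ioc k K, e j i)
          ≤ ((K:ℝ) - 1) * C := by
        have h1 : ((k - 1 : ℕ) : ℝ) + ((K - k : ℕ) : ℝ) = (K:ℝ) - 1 := by
          rw [Nat.cast_sub hk1, Nat.cast_sub hkK]
          push_cast
          ring
        have := add_le_add hs1 hs2
        rw [nsmul_eq_mul, nsmul_eq_mul] at this
        calc _ ≤ ((k - 1 : ℕ) : ℝ) * C + ((K - k : ℕ) : ℝ) * C := this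
          _ = (((k - 1 : ℕ) : ℝ) + ((K - k : ℕ) : ℝ)) * C := by ring
          _ = ((K:ℝ) - 1) * C := by rw [h1]
      -- conclude
      have hrk := hrec j k hk
      have hstep : e (j + 1) k ≤ ε + q * C := by
        calc e (j + 1) k ≤ ε + (q / ((K : ℝ) - 1)) *
              ((∑ i ∈ Finset.Ico 1 k, e (j + 1) i) + (∑ i ∈ Finset.Ioc k K, e j i)) := hrk
          _ ≤ ε + (q / ((K : ℝ) - 1)) * (((K:ℝ) - 1) * C) := by
              have := mul_le_mul_of_nonneg_left hsum (div_nonneg hq0 hD.le)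
              linarith
          _ = ε + q * C := by
              field_simp
      have h2 : q * q ^ m = q ^ n := by
        rw [← pow_succ']
        congr 1
        omega
      have h3 : ε + q * (ε / (1 - q)) = ε / (1 - q) := by
        field_simp
        ring
      have hkey : ε + q * C = ε / (1 - q) + B * q ^ n := by
        have h4 : q * (B * q ^ m) = B * q ^ n := by rw [← h2]; ring
        rw [hC, mul_add, h4, ← add_assoc, h3]
      exact hstep.trans hkey.le
  -- main induction on the sweep index
  intro j
  induction j with
  | zero =>
      apply sweep 0
      intro k i hk hi hki
      obtain ⟨hi1, hiK⟩ := Finset.mem_Ioc.mp (Finset.mem_Ioc.mpr ⟨hki, (Finset.mem_Icc.mp hi).2⟩)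
      have hceil1 : ⌈((0 * K + k : ℕ) : ℝ) / ((K : ℝ) - 1)⌉₊ ≤ 1 := by
        apply Nat.ceil_le.mpr
        rw [Nat.cast_one, div_le_one hD]
        have hkK1 : k ≤ K - 1 := by
          have := (Finset.mem_Icc.mp hi).2
          omega
        have : (k:ℝ) ≤ ((K - 1 : ℕ) : ℝ) := by exact_mod_cast hkK1
        rw [Nat.cast_sub (by omega)] at this
        push_cast at this ⊢
        linarith
      have hexp : ⌈((0 * K + k : ℕ) : ℝ) / ((K : ℝ) - 1)⌉₊ - 1 = 0 := by omega
      rw [hexp, pow_zero, mul_one]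
      have := h0 i hi
      linarith
  | succ j ih =>
      apply sweep (j + 1)
      intro k i hk hi hki
      obtain ⟨hk1, hkK⟩ := Finset.mem_Icc.mp hk
      obtain ⟨hi1, hiK⟩ := Finset.mem_Icc.mp hi
      have h1 := ih i hi
      have hle : ⌈(((j + 1) * K + k : ℕ) : ℝ) / ((K : ℝ) - 1)⌉₊ ≤
          ⌈((j * K + i : ℕ) : ℝ) / ((K : ℝ) - 1)⌉₊ + 1 := by
        apply hceil
        push_cast
        have : (k:ℝ) + 1 ≤ i := by exact_mod_cast hki
        linarith
      have hm' : ⌈(((j + 1) * K + k : ℕ) : ℝ) / ((K : ℝ) - 1)⌉₊ - 1 ≤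
          ⌈((j * K + i : ℕ) : ℝ) / ((K : ℝ) - 1)⌉₊ := by omega
      have hpow : q ^ (⌈((j * K + i : ℕ) : ℝ) / ((K : ℝ) - 1)⌉₊) ≤
          q ^ (⌈(((j + 1) * K + k : ℕ) : ℝ) / ((K : ℝ) - 1)⌉₊ - 1) :=
        pow_le_pow_of_le_one hq0 hq1.le hm'
      have := mul_le_mul_of_nonneg_left hpow hB
      linarith
end

section
/- Let N_h be a positive integer, h = 1/N_h, and t_n = n h for n = 0,…,N_h−1. Let g : [0,1] → ℝ be Lipschitz continuous with constant C, satisfy |g(t)| ≤ G for all t, and have mean zero: ∫_0^1 g(t) dt = 0. Let γ > 0 and let D(m,n) be real numbers with D(m,n) ≥ γ for all m,n ∈ {0,…,N_h−1}; set D(m) = Σ_{n=0}^{N_h−1} D(m,n) and β = ( Σ_{m=0}^{N_h−1} Σ_{n=0}^{N_h−1} ((D(m,n) − γ)/D(m))^2 )^{1/2}. Define the piecewise constant function S : [0,1) → ℝ by S(x) = ( Σ_{n=0}^{N_h−1} g(t_n) D(m,n) ) / D(m) for x ∈ [t_m, t_m + h). Then ( ∫_0^1 S(x)^2 dx )^{1/2}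 ≤ β ( ∫_0^1 g(t)^2 dt + G C h )^{1/2} + C h / 2. (This is the one-step perturbation bound at the heart of the proofs of Theorems 3.2 and 3.4: the partition-averaged leakage of one mode into another mode's regression has L^2 norm at most β times the L^2 norm of the leaking shape function, up to O(h) errors; it also yields the paper's bound ‖s̄_k − s_k‖_{L^2} ≤ O(ε + M^2 β Σ_{ℓ≠k}‖s_ℓ‖_{L^2}) in the under-specified case K̄ < K.) -/
open MeasureTheory

lemma tri_integral (a h C' : ℝ) :
    (∫ t in a..(a + h), C' * (t - a)) = C' * h ^ 2 / 2 := by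
  rw [intervalIntegral.integral_const_mul]
  have : (∫ t in a..(a + h), (t - a)) = ∫ x in (a - a)..(a + h - a), x :=
    intervalIntegral.integral_comp_sub_right (fun x => x) a
  rw [this]
  simp [integral_id]
  ring

lemma cell_riemann (g : ℝ → ℝ) (C a h : ℝ) (hC : 0 ≤ C) (hh0 : 0 < h)
    (ha : 0 ≤ a) (hb : a + h ≤ 1)
    (gcont : ContinuousOn g (Set.Icc 0 1))
    (hLip : ∀ x ∈ Set.Icc (0:ℝ) 1, ∀ z ∈ Set.Icc (0:ℝ) 1, |g x - g z| ≤ C * |x - z|) :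
    |h * g a - ∫ t in a..(a + h), g t| ≤ C * h ^ 2 / 2 := by
  have hsub : Set.Icc a (a + h) ⊆ Set.Icc (0:ℝ) 1 :=
    Set.Icc_subset_Icc ha hb
  have hab : a ≤ a + h := by linarith
  have huIcc : Set.uIcc a (a + h) = Set.Icc a (a + h) := Set.uIcc_of_le hab
  have gci : IntervalIntegrable g volume a (a + h) := by
    apply ContinuousOn.intervalIntegrable
    rw [huIcc]; exact gcont.mono hsub
  have hgc : (∫ t in a..(a + h), g a) = h * g a := by
    simp [mul_comm]
  have key : h * g a - (∫ t in a..(a + h), g t)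
      = ∫ t in a..(a + h), (g a - g t) := by
    rw [intervalIntegral.integral_sub (intervalIntegrable_const) gci, hgc]
  rw [key]
  calc |∫ t in a..(a + h), (g a - g t)| ≤ ∫ t in a..(a + h), |g a - g t| :=
        intervalIntegral.abs_integral_le_integral_abs hab
    _ ≤ ∫ t in a..(a + h), C * (t - a) := by
        apply intervalIntegral.integral_mono_on hab
        · apply ContinuousOn.intervalIntegrable
          rw [huIcc]
          exact (continuousOn_const.sub (gcont.mono hsub)).abs
        · exact Continuous.intervalIntegrable (by continuity) a (a + h)
        · intro t ht
          have h1 : t ∈ Set.Icc (0:ℝ) 1 := hsub ht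
          have h2 : a ∈ Set.Icc (0:ℝ) 1 := ⟨ha, by linarith⟩
          have := hLip a h2 t h1
          have habs : |a - t| = t - a := by
            rw [abs_sub_comm, abs_of_nonneg (by linarith [ht.1])]
          rw [habs] at this
          exact this
    _ = C * h ^ 2 / 2 := tri_integral a h C

lemma cell_sq (g : ℝ → ℝ) (C G a h : ℝ) (hC : 0 ≤ C) (hh0 : 0 < h)
    (ha : 0 ≤ a) (hb : a + h ≤ 1)
    (gcont : ContinuousOn g (Set.Icc 0 1))
    (hLip : ∀ x ∈ Set.Icc (0:ℝ) 1, ∀ z ∈ Set.Icc (0:ℝ) 1, |g x - g z| ≤ C * |x - z|)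
    (hG : ∀ t ∈ Set.Icc (0:ℝ) 1, |g t| ≤ G) :
    h * g a ^ 2 ≤ (∫ t in a..(a + h), g t ^ 2) + G * C * h ^ 2 := by
  have hsub : Set.Icc a (a + h) ⊆ Set.Icc (0:ℝ) 1 :=
    Set.Icc_subset_Icc ha hb
  have hab : a ≤ a + h := by linarith
  have huIcc : Set.uIcc a (a + h) = Set.Icc a (a + h) := Set.uIcc_of_le hab
  have ha01 : a ∈ Set.Icc (0:ℝ) 1 := ⟨ha, by linarith⟩
  have gci2 : IntervalIntegrable (fun t => g a ^ 2 - g t ^ 2) volume a (a + h) := by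
    apply ContinuousOn.intervalIntegrable
    rw [huIcc]
    exact continuousOn_const.sub ((gcont.mono hsub).pow 2)
  have key : (∫ t in a..(a + h), (g a ^ 2 - g t ^ 2)) ≤ 2 * G * C * h ^ 2 / 2 := by
    calc (∫ t in a..(a + h), (g a ^ 2 - g t ^ 2))
        ≤ ∫ t in a..(a + h), (2 * G * C) * (t - a) := by
          apply intervalIntegral.integral_mono_on hab gci2
            (Continuous.intervalIntegrable (by continuity) a (a + h))
          intro t ht
          have h1 : t ∈ Set.Icc (0:ℝ) 1 := hsub ht
          have hd : |g a - g t| ≤ C * (t - a) := by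
            have := hLip a ha01 t h1
            have habs : |a - t| = t - a := by
              rw [abs_sub_comm, abs_of_nonneg (by linarith [ht.1])]
            rwa [habs] at this
          have hs : |g a + g t| ≤ 2 * G := by
            have := abs_add_le (g a) (g t)
            have g1 := hG a ha01
            have g2 := hG t h1
            linarith
          calc g a ^ 2 - g t ^ 2 = (g a - g t) * (g a + g t) := by ring
            _ ≤ |(g a - g t) * (g a + g t)| := le_abs_self _
            _ = |g a - g t| * |g a + g t| := abs_mul _ _
            _ ≤ (C * (t - a)) * (2 * G) := by
                apply mul_le_mul hd hs (abs_nonneg _)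
                have : 0 ≤ t - a := by linarith [ht.1]
                positivity
            _ = (2 * G * C) * (t - a) := by ring
      _ = 2 * G * C * h ^ 2 / 2 := tri_integral a h (2 * G * C)
  have gci : IntervalIntegrable (fun t => g t ^ 2) volume a (a + h) := by
    apply ContinuousOn.intervalIntegrable
    rw [huIcc]
    exact (gcont.mono hsub).pow 2
  have hconst : (∫ t in a..(a + h), g a ^ 2) = h * g a ^ 2 := by
    simp [mul_comm]
  rw [intervalIntegral.integral_sub (intervalIntegrable_const) gci, hconst] at key
  linarith

lemma floor_cell (Nh : ℕ) (h x : ℝ) (k : ℕ) (hh : h = 1 / (Nh : ℝ)) (hNh : 0 < Nh)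
    (h1 : (k : ℝ) * h ≤ x) (h2 : x < ((k : ℝ) + 1) * h) :
    (⌊x * (Nh : ℝ)⌋).toNat = k := by
  have hN0 : (0:ℝ) < (Nh : ℝ) := by exact_mod_cast hNh
  have hhN : h * (Nh : ℝ) = 1 := by rw [hh]; field_simp
  have l1 : (k : ℝ) ≤ x * Nh := by
    have := mul_le_mul_of_nonneg_right h1 (le_of_lt hN0)
    calc (k : ℝ) = (k : ℝ) * (h * Nh) := by rw [hhN]; ring
      _ = (k : ℝ) * h * Nh := by ring
      _ ≤ x * Nh := this
  have l2 : x * Nh < (k : ℝ) + 1 := by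
    have := mul_lt_mul_of_pos_right h2 hN0
    calc x * Nh < ((k:ℝ) + 1) * h * Nh := this
      _ = ((k:ℝ) + 1) * (h * Nh) := by ring
      _ = (k : ℝ) + 1 := by rw [hhN]; ring
  have : ⌊x * (Nh:ℝ)⌋ = (k : ℤ) := by
    rw [Int.floor_eq_iff]
    constructor
    · exact_mod_cast l1
    · push_cast; exact_mod_cast l2
  rw [this]; simp

/-- one-step perturbation bound at the heart of Theorems 3.2 and 3.4.
The partition-averaged leakage `S` of a mean-zero Lipschitz shape function `g` has `L²`
norm at most `β` times the (discretization-corrected) `L²` norm of `g`, up to `O(h)`. -/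
theorem one_step_perturbation_bound
    (Nh : ℕ) (hNh : 0 < Nh) (h : ℝ) (hh : h = 1 / (Nh : ℝ))
    (g : ℝ → ℝ) (C G : ℝ) (hC : 0 ≤ C)
    (hLip : ∀ x ∈ Set.Icc (0:ℝ) 1, ∀ z ∈ Set.Icc (0:ℝ) 1, |g x - g z| ≤ C * |x - z|)
    (hG : ∀ t ∈ Set.Icc (0:ℝ) 1, |g t| ≤ G)
    (hmean : (∫ t in (0:ℝ)..1, g t) = 0)
    (γ : ℝ) (hγ : 0 < γ)
    (D : ℕ → ℕ → ℝ)
    (hD : ∀ m ∈ Finset.range Nh, ∀ n ∈ Finset.range Nh, γ ≤ D m n)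
    (Dm : ℕ → ℝ) (hDm : ∀ m, Dm m = ∑ n ∈ Finset.range Nh, D m n)
    (β : ℝ)
    (hβ : β = Real.sqrt
      (∑ m ∈ Finset.range Nh, ∑ n ∈ Finset.range Nh, ((D m n - γ) / Dm m) ^ 2))
    (S : ℝ → ℝ)
    (hS : ∀ x ∈ Set.Ico (0:ℝ) 1,
      S x = (∑ n ∈ Finset.range Nh, g ((n : ℝ) * h) * D (⌊x * (Nh : ℝ)⌋.toNat) n) /
        Dm (⌊x * (Nh : ℝ)⌋.toNat)) :
    Real.sqrt (∫ x in (0:ℝ)..1, S x ^ 2) ≤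
      β * Real.sqrt ((∫ t in (0:ℝ)..1, g t ^ 2) + G * C * h) + C * h / 2 := by
  have hN0 : (0:ℝ) < (Nh : ℝ) := by exact_mod_cast hNh
  have hh0 : 0 < h := by rw [hh]; positivity
  have hhN : (Nh : ℝ) * h = 1 := by rw [hh]; field_simp
  have hG0 : 0 ≤ G := le_trans (abs_nonneg _) (hG 0 (by constructor <;> norm_num))
  -- continuity of g on [0,1]
  have gcont : ContinuousOn g (Set.Icc 0 1) := by
    have : LipschitzOnWith (Real.toNNReal C) g (Set.Icc 0 1) := by
      apply LipschitzOnWith.of_dist_le_mul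
      intro x hx y hy
      rw [Real.dist_eq, Real.dist_eq, Real.coe_toNNReal C hC]
      exact hLip x hx y hy
    exact this.continuousOn
  -- the grid
  set F : ℕ → ℝ := fun k => (k : ℝ) * h with hF
  have hF0 : F 0 = 0 := by simp [hF]
  have hFN : F Nh = 1 := by simp [hF]; linarith [hhN]
  have hFsucc : ∀ k : ℕ, F (k + 1) = F k + h := by
    intro k; simp [hF]; push_cast; ring
  have hFnonneg : ∀ k : ℕ, 0 ≤ F k := by intro k; simp [hF]; positivity
  have hFub : ∀ k : ℕ, k < Nh → F k + h ≤ 1 := by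
    intro k hk
    have : ((k:ℝ) + 1) ≤ (Nh : ℝ) := by exact_mod_cast Nat.succ_le_of_lt hk
    have := mul_le_mul_of_nonneg_right this hh0.le
    simp only [hF]; nlinarith
  have hFle : ∀ k : ℕ, F k ≤ F (k + 1) := by
    intro k; rw [hFsucc]; linarith
  -- integrability of g and g² on cells
  have hintg : ∀ k < Nh, IntervalIntegrable g volume (F k) (F (k + 1)) := by
    intro k hk
    apply ContinuousOn.intervalIntegrable
    rw [Set.uIcc_of_le (hFle k)]
    exact gcont.mono (Set.Icc_subset_Icc (hFnonneg k) (by rw [hFsucc]; exact hFub k hk))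
  have hintg2 : ∀ k < Nh, IntervalIntegrable (fun t => g t ^ 2) volume (F k) (F (k + 1)) := by
    intro k hk
    apply ContinuousOn.intervalIntegrable
    rw [Set.uIcc_of_le (hFle k)]
    exact (gcont.mono (Set.Icc_subset_Icc (hFnonneg k)
      (by rw [hFsucc]; exact hFub k hk))).pow 2
  have hsumg : ∑ k ∈ Finset.range Nh, (∫ t in F k..F (k + 1), g t) = 0 := by
    rw [intervalIntegral.sum_integral_adjacent_intervals hintg, hF0, hFN, hmean]
  have hsumg2 : ∑ k ∈ Finset.range Nh, (∫ t in F k..F (k + 1), g t ^ 2)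
      = ∫ t in (0:ℝ)..1, g t ^ 2 := by
    rw [intervalIntegral.sum_integral_adjacent_intervals hintg2, hF0, hFN]
  -- the Riemann sum bound for g
  have hT : |∑ n ∈ Finset.range Nh, g ((n : ℝ) * h)| ≤ C / 2 := by
    have e1 : h * (∑ n ∈ Finset.range Nh, g ((n : ℝ) * h))
        = ∑ n ∈ Finset.range Nh, (h * g (F n) - ∫ t in F n..F (n + 1), g t) := by
      rw [Finset.sum_sub_distrib, hsumg, sub_zero, Finset.mul_sum]
    have e2 : |∑ n ∈ Finset.range Nh, (h * g (F n) - ∫ t in F n..F (n + 1), g t)|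
        ≤ ∑ n ∈ Finset.range Nh, (C * h ^ 2 / 2) := by
      refine (Finset.abs_sum_le_sum_abs _ _).trans (Finset.sum_le_sum ?_)
      intro n hn
      have hn' := Finset.mem_range.mp hn
      have := cell_riemann g C (F n) h hC hh0 (hFnonneg n) (hFub n hn') gcont hLip
      rwa [← hFsucc n] at this
    rw [← e1] at e2
    rw [Finset.sum_const, Finset.card_range, nsmul_eq_mul] at e2
    have e3 : (Nh : ℝ) * (C * h ^ 2 / 2) = C * h / 2 := by
      linear_combination (C * h / 2) * hhN
    rw [e3, abs_mul, abs_of_pos hh0] at e2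
    calc |∑ n ∈ Finset.range Nh, g ((n : ℝ) * h)|
        = h * |∑ n ∈ Finset.range Nh, g ((n : ℝ) * h)| / h := by rw [mul_div_cancel_left₀ _ hh0.ne']
      _ ≤ (C * h / 2) / h := by gcongr
      _ = C / 2 := by field_simp
  -- the squared Riemann sum bound
  have hP : h * (∑ n ∈ Finset.range Nh, g ((n : ℝ) * h) ^ 2)
      ≤ (∫ t in (0:ℝ)..1, g t ^ 2) + G * C * h := by
    have e1 : ∀ n ∈ Finset.range Nh, h * g (F n) ^ 2
        ≤ (∫ t in F n..F (n + 1), g t ^ 2) + G * C * h ^ 2 := by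
      intro n hn
      have hn' := Finset.mem_range.mp hn
      have := cell_sq g C G (F n) h hC hh0 (hFnonneg n) (hFub n hn') gcont hLip hG
      rwa [← hFsucc n] at this
    calc h * (∑ n ∈ Finset.range Nh, g ((n : ℝ) * h) ^ 2)
        = ∑ n ∈ Finset.range Nh, h * g (F n) ^ 2 := by rw [Finset.mul_sum]
      _ ≤ ∑ n ∈ Finset.range Nh, ((∫ t in F n..F (n + 1), g t ^ 2) + G * C * h ^ 2) :=
          Finset.sum_le_sum e1
      _ = (∫ t in (0:ℝ)..1, g t ^ 2) + G * C * h := by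
          rw [Finset.sum_add_distrib, hsumg2, Finset.sum_const, Finset.card_range,
            nsmul_eq_mul]
          congr 1
          linear_combination (G * C * h) * hhN
  -- finset quantities
  set T : ℝ := ∑ n ∈ Finset.range Nh, g ((n : ℝ) * h) with hTdef
  set P2 : ℝ := ∑ n ∈ Finset.range Nh, g ((n : ℝ) * h) ^ 2 with hP2def
  have hP20 : 0 ≤ P2 := Finset.sum_nonneg fun n _ => sq_nonneg _
  set P : ℝ := Real.sqrt P2 with hPdef
  have hP0 : 0 ≤ P := Real.sqrt_nonneg _
  have hPsq : P ^ 2 = P2 := Real.sq_sqrt hP20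
  set Q : ℝ := ∑ m ∈ Finset.range Nh, ∑ n ∈ Finset.range Nh, ((D m n - γ) / Dm m) ^ 2
    with hQdef
  have hQ0 : 0 ≤ Q := Finset.sum_nonneg fun m _ => Finset.sum_nonneg fun n _ => sq_nonneg _
  have hβ0 : 0 ≤ β := by rw [hβ]; exact Real.sqrt_nonneg _
  have hβ2 : β ^ 2 = Q := by rw [hβ]; exact Real.sq_sqrt hQ0
  set b : ℕ → ℝ := fun m => Real.sqrt (∑ n ∈ Finset.range Nh, ((D m n - γ) / Dm m) ^ 2)
    with hbdef
  have hb0 : ∀ m, 0 ≤ b m := fun m => Real.sqrt_nonneg _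
  have hb2 : ∀ m, b m ^ 2 = ∑ n ∈ Finset.range Nh, ((D m n - γ) / Dm m) ^ 2 := fun m =>
    Real.sq_sqrt (Finset.sum_nonneg fun n _ => sq_nonneg _)
  have hQb : ∑ m ∈ Finset.range Nh, b m ^ 2 = Q := by
    rw [hQdef]; exact Finset.sum_congr rfl fun m _ => hb2 m
  -- lower bound on Dm
  have hDmge : ∀ m < Nh, (Nh : ℝ) * γ ≤ Dm m := by
    intro m hm
    rw [hDm m]
    calc (Nh : ℝ) * γ = ∑ _n ∈ Finset.range Nh, γ := by
          rw [Finset.sum_const, Finset.card_range, nsmul_eq_mul]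
      _ ≤ ∑ n ∈ Finset.range Nh, D m n :=
          Finset.sum_le_sum fun n hn => hD m (Finset.mem_range.mpr hm) n hn
  have hDmpos : ∀ m < Nh, 0 < Dm m := fun m hm =>
    lt_of_lt_of_le (by positivity) (hDmge m hm)
  -- the cell values of S
  set V : ℕ → ℝ := fun m => (∑ n ∈ Finset.range Nh, g ((n : ℝ) * h) * D m n) / Dm m
    with hVdef
  have hV : ∀ m < Nh, |V m| ≤ P * b m + C * h / 2 := by
    intro m hm
    have hdm := hDmpos m hm
    have split : V m = (∑ n ∈ Finset.range Nh, g ((n : ℝ) * h) * ((D m n - γ) / Dm m))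
        + γ * T / Dm m := by
      simp only [hVdef]
      have e : ∑ n ∈ Finset.range Nh, g ((n : ℝ) * h) * D m n
          = (∑ n ∈ Finset.range Nh, g ((n : ℝ) * h) * (D m n - γ)) + γ * T := by
        rw [hTdef, Finset.mul_sum, ← Finset.sum_add_distrib]
        exact Finset.sum_congr rfl fun n _ => by ring
      rw [e, add_div, Finset.sum_div]
      congr 1
      exact Finset.sum_congr rfl fun n _ => by rw [mul_div_assoc]
    rw [split]
    have cs : |∑ n ∈ Finset.range Nh, g ((n : ℝ) * h) * ((D m n - γ) / Dm m)|
        ≤ P * b m := by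
      rw [← Real.sqrt_sq_eq_abs]
      calc Real.sqrt ((∑ n ∈ Finset.range Nh,
              g ((n : ℝ) * h) * ((D m n - γ) / Dm m)) ^ 2)
          ≤ Real.sqrt (P2 * (∑ n ∈ Finset.range Nh, ((D m n - γ) / Dm m) ^ 2)) := by
            apply Real.sqrt_le_sqrt
            rw [hP2def]
            exact Finset.sum_mul_sq_le_sq_mul_sq _ _ _
        _ = P * b m := by
            rw [Real.sqrt_mul hP20, hPdef, hbdef]
    have tb : |γ * T / Dm m| ≤ C * h / 2 := by
      rw [abs_div, abs_of_pos hdm, abs_mul, abs_of_pos hγ]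
      calc γ * |T| / Dm m ≤ γ * (C / 2) / ((Nh : ℝ) * γ) := by
            apply div_le_div₀ (by positivity) (by nlinarith [hT]) (by positivity) (hDmge m hm)
        _ = C * h / 2 := by rw [hh]; field_simp
    calc |(∑ n ∈ Finset.range Nh, g ((n : ℝ) * h) * ((D m n - γ) / Dm m))
          + γ * T / Dm m|
        ≤ |∑ n ∈ Finset.range Nh, g ((n : ℝ) * h) * ((D m n - γ) / Dm m)|
          + |γ * T / Dm m| := abs_add_le _ _
      _ ≤ P * b m + C * h / 2 := add_le_add cs tb
  -- S equals V on each cell, a.e.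
  have hcellS : ∀ k < Nh, ∀ᵐ x ∂(volume : Measure ℝ),
      x ∈ Set.uIoc (F k) (F (k + 1)) → S x ^ 2 = V k ^ 2 := by
    intro k hk
    have hne : ∀ᵐ x ∂(volume : Measure ℝ), x ≠ F (k + 1) := by
      rw [ae_iff]
      have : {x : ℝ | ¬x ≠ F (k + 1)} = {F (k + 1)} := by
        ext x; simp [not_not]
      rw [this]
      exact Real.volume_singleton
    filter_upwards [hne] with x hxne hxmem
    rw [Set.uIoc_of_le (hFle k)] at hxmem
    have hx2 : x < F (k + 1) := lt_of_le_of_ne hxmem.2 hxne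
    have hx01 : x ∈ Set.Ico (0:ℝ) 1 := by
      constructor
      · exact le_of_lt (lt_of_le_of_lt (hFnonneg k) hxmem.1)
      · exact lt_of_lt_of_le hx2 (by rw [hFsucc]; exact hFub k hk)
    have hfl : (⌊x * (Nh : ℝ)⌋).toNat = k := by
      apply floor_cell Nh h x k hh hNh
      · exact le_of_lt hxmem.1
      · have : F (k + 1) = ((k : ℝ) + 1) * h := by rw [hF]; push_cast; ring
        rw [← this]; exact hx2
    rw [hS x hx01, hfl]
  -- integrability and value of the cell integrals of S²
  have hintS : ∀ k < Nh, IntervalIntegrable (fun x => S x ^ 2) volume (F k) (F (k + 1)) := by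
    intro k hk
    rw [intervalIntegrable_iff]
    have hconst : IntegrableOn (fun _ => V k ^ 2 : ℝ → ℝ)
        (Set.uIoc (F k) (F (k + 1))) volume := by
      refine integrableOn_const ?_
      rw [Set.uIoc_of_le (hFle k)]
      exact measure_Ioc_lt_top.ne
    apply hconst.congr
    have h1 : ∀ᵐ x ∂(volume.restrict (Set.uIoc (F k) (F (k + 1)))),
        x ∈ Set.uIoc (F k) (F (k + 1)) := ae_restrict_mem measurableSet_uIoc
    have h2 := ae_restrict_of_ae (μ := volume)
      (s := Set.uIoc (F k) (F (k + 1))) (hcellS k hk)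
    filter_upwards [h1, h2] with x hx1 hx2
    exact (hx2 hx1).symm
  have hvalS : ∀ k < Nh, (∫ x in F k..F (k + 1), S x ^ 2) = h * V k ^ 2 := by
    intro k hk
    rw [intervalIntegral.integral_congr_ae (hcellS k hk),
      intervalIntegral.integral_const, hFsucc, smul_eq_mul]
    ring
  have hS2 : (∫ x in (0:ℝ)..1, S x ^ 2) = ∑ k ∈ Finset.range Nh, h * V k ^ 2 := by
    rw [← hF0, ← hFN, ← intervalIntegral.sum_integral_adjacent_intervals hintS]
    exact Finset.sum_congr rfl fun k hk => hvalS k (Finset.mem_range.mp hk)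
  rw [hS2]
  set c : ℝ := C * h / 2 with hcdef
  have hc0 : 0 ≤ c := by rw [hcdef]; positivity
  set Y : ℝ := Real.sqrt h * P * β with hYdef
  have hY0 : 0 ≤ Y := by rw [hYdef]; positivity
  have hQsqrt : Real.sqrt Q = β := by rw [hβ, hQdef]
  have hsumb : ∑ k ∈ Finset.range Nh, b k ≤ Real.sqrt (Nh : ℝ) * β := by
    have h1 := Real.sum_mul_le_sqrt_mul_sqrt (Finset.range Nh) (fun _ => (1:ℝ)) b
    simp only [one_mul, one_pow, Finset.sum_const, Finset.card_range, nsmul_eq_mul,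
      mul_one] at h1
    rwa [hQb, hQsqrt] at h1
  have hsqNh : Real.sqrt (Nh : ℝ) * h = Real.sqrt h := by
    calc Real.sqrt (Nh : ℝ) * h = Real.sqrt (Nh : ℝ) * Real.sqrt (h ^ 2) := by
          rw [Real.sqrt_sq hh0.le]
      _ = Real.sqrt ((Nh : ℝ) * h ^ 2) := (Real.sqrt_mul hN0.le _).symm
      _ = Real.sqrt h := by rw [show (Nh:ℝ) * h ^ 2 = h by linear_combination h * hhN]
  have e1 : Real.sqrt h ^ 2 = h := Real.sq_sqrt hh0.le
  have key1 : ∑ k ∈ Finset.range Nh, h * V k ^ 2 ≤ (Y + c) ^ 2 := by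
    have stepA : ∀ k ∈ Finset.range Nh, h * V k ^ 2 ≤ h * (P * b k + c) ^ 2 := by
      intro k hk
      apply mul_le_mul_of_nonneg_left ?_ hh0.le
      calc V k ^ 2 = |V k| ^ 2 := (sq_abs _).symm
        _ ≤ (P * b k + c) ^ 2 :=
            pow_le_pow_left₀ (abs_nonneg _) (hV k (Finset.mem_range.mp hk)) 2
    have expand : ∑ k ∈ Finset.range Nh, h * (P * b k + c) ^ 2
        = h * P ^ 2 * (∑ k ∈ Finset.range Nh, b k ^ 2)
          + 2 * h * P * c * (∑ k ∈ Finset.range Nh, b k) + (Nh : ℝ) * h * c ^ 2 := by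
      have e : ∀ k : ℕ, h * (P * b k + c) ^ 2
          = h * P ^ 2 * b k ^ 2 + 2 * h * P * c * b k + h * c ^ 2 := fun k => by ring
      rw [Finset.sum_congr rfl fun k _ => e k, Finset.sum_add_distrib,
        Finset.sum_add_distrib, ← Finset.mul_sum, ← Finset.mul_sum, Finset.sum_const,
        Finset.card_range, nsmul_eq_mul]
      ring
    calc ∑ k ∈ Finset.range Nh, h * V k ^ 2
        ≤ ∑ k ∈ Finset.range Nh, h * (P * b k + c) ^ 2 := Finset.sum_le_sum stepA
      _ = h * P ^ 2 * (∑ k ∈ Finset.range Nh, b k ^ 2)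
          + 2 * h * P * c * (∑ k ∈ Finset.range Nh, b k) + (Nh : ℝ) * h * c ^ 2 := expand
      _ ≤ h * P ^ 2 * Q + 2 * h * P * c * (Real.sqrt (Nh : ℝ) * β)
          + (Nh : ℝ) * h * c ^ 2 := by
          rw [hQb]
          have h2 := mul_le_mul_of_nonneg_left hsumb
            (show (0:ℝ) ≤ 2 * h * P * c by positivity)
          linarith
      _ = (Y + c) ^ 2 := by
          rw [hYdef, ← hβ2]
          linear_combination (-(P ^ 2 * β ^ 2)) * e1 + (2 * P * c * β) * hsqNh
            + c ^ 2 * hhN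
  have key2 : Real.sqrt (∑ k ∈ Finset.range Nh, h * V k ^ 2) ≤ Y + c :=
    calc Real.sqrt (∑ k ∈ Finset.range Nh, h * V k ^ 2)
        ≤ Real.sqrt ((Y + c) ^ 2) := Real.sqrt_le_sqrt key1
      _ = Y + c := Real.sqrt_sq (by positivity)
  have key3 : Y ≤ β * Real.sqrt ((∫ t in (0:ℝ)..1, g t ^ 2) + G * C * h) := by
    calc Y = β * (Real.sqrt h * P) := by rw [hYdef]; ring
      _ = β * Real.sqrt (h * P2) := by rw [Real.sqrt_mul hh0.le, hPdef]
      _ ≤ β * Real.sqrt ((∫ t in (0:ℝ)..1, g t ^ 2) + G * C * h) := by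
          apply mul_le_mul_of_nonneg_left (Real.sqrt_le_sqrt ?_) hβ0
          exact hP
  linarith [key2, key3]
end

section
/- Let K ≥ 2 and M_0 ≥ 0 be integers, ε ≥ 0, B ≥ 0, and Q ≥ 0 with 2Q < 1. Suppose nonnegative real numbers e_{c,n,k}^{(j)} and e_{s,n,k}^{(j)}, indexed by n ∈ {−M_0,…,M_0}, k ∈ {1,…,K} and j ≥ 0, satisfy e_{c,n,k}^{(0)} + e_{s,n,k}^{(0)} ≤ B for all n,k, and for every j ≥ 0 and all n,k: e_{c,n,k}^{(j+1)} ≤ ε + Q · max_{m,k'} ( e_{c,m,k'}^{(j)} + e_{s,m,k'}^{(j)} ) and e_{s,n,k}^{(j+1)} ≤ ε + Q · max_{m,k'} ( e_{c,m,k'}^{(j)} + e_{s,m,k'}^{(j)} ), where the maximum is over m ∈ {−M_0,…,M_0} and k' ∈ {1,…,K}. Then for every j ≥ 1 and all n,k: e_{c,n,k}^{(j)} ≤ ε/(1−2Q) + (B/2)(2Q)^j and e_{s,n,k}^{(j)} ≤ ε/(1−2Q) + (B/2)(2Q)^j. (This is the quantitative iteration core of Theorem 4.1 on the convergence of the multiresolution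 mode decomposition: in the paper e_{c,n,k}^{(j)} = ‖s_{cn,k}^{(j)}‖_{L^2} and e_{s,n,k}^{(j)} = ‖s_{sn,k}^{(j)}‖_{L^2} are the L^2 norms of the cosine- and sine-type residual shape functions of the K MIMFs at sweep j, Q = β(2M_0+1)(K−1) with β the well-differentiation parameter of the phase functions, and ε is the per-step regression accuracy.) -/
/-- The maximum over all frequency bands `n ∈ {−M₀,…,M₀}` and components
`k ∈ {1,…,K}` of the sum of the cosine- and sine-type residual norms at sweep `j`.
(For `K ≥ 1` the index set is nonempty and this supremum is the genuine maximum.) -/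
noncomputable def mmdMaxSum (K M0 : ℕ) (ec es : ℕ → ℤ → ℕ → ℝ) (j : ℕ) : ℝ :=
  ⨆ p : ↥(Finset.Icc (-(M0 : ℤ)) (M0 : ℤ) ×ˢ Finset.Icc 1 K),
    ec j (p : ℤ × ℕ).1 (p : ℤ × ℕ).2 + es j (p : ℤ × ℕ).1 (p : ℤ × ℕ).2

/-- quantitative iteration core of Theorem 4.1 (convergence of the
multiresolution mode decomposition), with `Q = β(2M₀+1)(K−1)`. -/
theorem mmd_iteration_core
    (K M0 : ℕ) (hK : 2 ≤ K) (ε B Q : ℝ)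
    (hε : 0 ≤ ε) (hB : 0 ≤ B) (hQ0 : 0 ≤ Q) (hQ : 2 * Q < 1)
    (ec es : ℕ → ℤ → ℕ → ℝ)
    (hnn : ∀ j n k, 0 ≤ ec j n k ∧ 0 ≤ es j n k)
    (h0 : ∀ n ∈ Finset.Icc (-(M0 : ℤ)) (M0 : ℤ), ∀ k ∈ Finset.Icc 1 K,
      ec 0 n k + es 0 n k ≤ B)
    (hrecc : ∀ j : ℕ, ∀ n ∈ Finset.Icc (-(M0 : ℤ)) (M0 : ℤ), ∀ k ∈ Finset.Icc 1 K,
      ec (j + 1) n k ≤ ε + Q * mmdMaxSum K M0 ec es j)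
    (hrecs : ∀ j : ℕ, ∀ n ∈ Finset.Icc (-(M0 : ℤ)) (M0 : ℤ), ∀ k ∈ Finset.Icc 1 K,
      es (j + 1) n k ≤ ε + Q * mmdMaxSum K M0 ec es j) :
    ∀ j : ℕ, 1 ≤ j → ∀ n ∈ Finset.Icc (-(M0 : ℤ)) (M0 : ℤ), ∀ k ∈ Finset.Icc 1 K,
      ec j n k ≤ ε / (1 - 2 * Q) + (B / 2) * (2 * Q) ^ j ∧
      es j n k ≤ ε / (1 - 2 * Q) + (B / 2) * (2 * Q) ^ j := by
  have h1 : (0:ℝ) < 1 - 2*Q := by linarith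
  haveI : Nonempty ↥(Finset.Icc (-(M0 : ℤ)) (M0 : ℤ) ×ˢ Finset.Icc 1 K) := by
    refine ⟨⟨((0:ℤ), (1:ℕ)), ?_⟩⟩
    rw [Finset.mem_product]
    constructor <;> simp <;> omega
  have hT : ∀ j, mmdMaxSum K M0 ec es j ≤ 2*ε/(1-2*Q) + B*(2*Q)^j := by
    intro j
    induction j with
    | zero =>
      apply ciSup_le
      rintro ⟨⟨n, k⟩, hp⟩
      rw [Finset.mem_product] at hp
      have := h0 n hp.1 k hp.2
      have hnum : 0 ≤ 2*ε/(1-2*Q) := by positivity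
      simp only [pow_zero, mul_one]
      linarith
    | succ j ih =>
      apply ciSup_le
      rintro ⟨⟨n, k⟩, hp⟩
      rw [Finset.mem_product] at hp
      have hc := hrecc j n hp.1 k hp.2
      have hs := hrecs j n hp.1 k hp.2
      have hmul : Q * mmdMaxSum K M0 ec es j ≤ Q * (2*ε/(1-2*Q) + B*(2*Q)^j) :=
        mul_le_mul_of_nonneg_left ih hQ0
      have hD : 2*ε + 2*Q*(2*ε/(1-2*Q)) = 2*ε/(1-2*Q) := by
        field_simp; ring
      have : (2*Q)^(j+1) = 2*Q*(2*Q)^j := by ring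
      simp only [this]
      nlinarith [hmul]
  intro j hj n hn k hk
  obtain ⟨i, rfl⟩ : ∃ i, j = i + 1 := ⟨j - 1, by omega⟩
  have hc := hrecc i n hn k hk
  have hs := hrecs i n hn k hk
  have hmul : Q * mmdMaxSum K M0 ec es i ≤ Q * (2*ε/(1-2*Q) + B*(2*Q)^i) :=
    mul_le_mul_of_nonneg_left (hT i) hQ0
  have hD : ε + Q*(2*ε/(1-2*Q)) = ε/(1-2*Q) := by
    rw [eq_div_iff h1.ne', add_mul, mul_assoc Q, div_mul_cancel₀ _ h1.ne']; ring
  have hpow : (B/2) * (2*Q)^(i+1) = Q*(B*(2*Q)^i) := by ring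
  constructor <;> nlinarith [hmul]
end
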